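/- arXiv:2012.05435 — 3 statements merged into one kernel-verified Lean document; each statement's English description precedes it below -/
import Mathlib

section
/- (Proposition 1, part 1: monotone descent of Algorithm 1 with the optimality-checking control mechanism.) Let (u^t), (v^t) be sequences in E such that for every t: (i) Ψ(v^t) ≤ Ψ(u^t) (the optimality check selects v^t among candidates whose objective value does not exceed Ψ(u^t)); (ii) γ^t > L; and (iii) u^{t+1} minimizes over E the objective u ↦ φ(u) + (γ^t/2)·‖u − v^t + (1/γ^t)·∇f(v^t)‖². Then for every t, Ψ(u^{t+1}) + β^t·‖u^{t+1} − v^t‖² ≤ Ψ(u^t) with β^t = (γ^t − L)/2 > 0; in particular the sequence Ψ(u^t) is nonincreasing. -/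
open scoped RealInnerProductSpace

lemma descent_lemma
    {E : Type*} [NormedAddCommGroup E] [InnerProductSpace ℝ E]
    (f : E → ℝ) (gradf : E → E) (L : ℝ) (hL : 0 < L)
    (hgrad : ∀ x : E, HasFDerivAt f (innerSL ℝ (gradf x)) x)
    (hlip : ∀ x y : E, ‖gradf x - gradf y‖ ≤ L * ‖x - y‖)
    (x y : E) :
    f x ≤ f y + ⟪gradf y, x - y⟫ + L / 2 * ‖x - y‖ ^ 2 := by
  have hgc : Continuous gradf := by
    refine (LipschitzWith.of_dist_le_mul (K := L.toNNReal) (f := gradf) ?_).continuous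
    intro a b
    simpa [dist_eq_norm, Real.coe_toNNReal _ hL.le] using hlip a b
  set c : ℝ → E := fun t => y + t • (x - y) with hc
  have hcc : Continuous c := by continuity
  have hder : ∀ t : ℝ, HasDerivAt (fun t => f (c t)) ⟪gradf (c t), x - y⟫ t := by
    intro t
    have h1 : HasDerivAt c (x - y) t := by
      simpa [hc] using ((hasDerivAt_id t).smul_const (x - y)).const_add y
    have := (hgrad (c t)).comp_hasDerivAt t h1
    exact this
  have hcont : Continuous fun t : ℝ => ⟪gradf (c t), x - y⟫ := by
    exact (continuous_inner.comp ((hgc.comp hcc).prodMk continuous_const))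
  have hint : ∫ t in (0:ℝ)..1, ⟪gradf (c t), x - y⟫ = f (c 1) - f (c 0) := by
    exact intervalIntegral.integral_eq_sub_of_hasDerivAt (fun t _ => hder t)
      (hcont.intervalIntegrable 0 1)
  have hc0 : c 0 = y := by simp [hc]
  have hc1 : c 1 = x := by simp [hc]
  have hmono : ∫ t in (0:ℝ)..1, ⟪gradf (c t), x - y⟫ ≤
      ∫ t in (0:ℝ)..1, (⟪gradf y, x - y⟫ + L * ‖x - y‖ ^ 2 * t) := by
    apply intervalIntegral.integral_mono_on zero_le_one
      (hcont.intervalIntegrable 0 1)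
      ((continuous_const.add (continuous_const.mul continuous_id')).intervalIntegrable 0 1)
    intro t ht
    have h1 : ⟪gradf (c t), x - y⟫ - ⟪gradf y, x - y⟫ = ⟪gradf (c t) - gradf y, x - y⟫ := by
      rw [inner_sub_left]
    have h2 : ⟪gradf (c t) - gradf y, x - y⟫ ≤ ‖gradf (c t) - gradf y‖ * ‖x - y‖ :=
      real_inner_le_norm _ _
    have h3 : ‖gradf (c t) - gradf y‖ ≤ L * (t * ‖x - y‖) := by
      have := hlip (c t) y
      simpa [hc, norm_smul, abs_of_nonneg ht.1] using this
    show ⟪gradf (c t), x - y⟫ ≤ ⟪gradf y, x - y⟫ + L * ‖x - y‖ ^ 2 * t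
    nlinarith [norm_nonneg (x - y), sq_nonneg (‖x - y‖)]
  have hval : ∫ t in (0:ℝ)..1, (⟪gradf y, x - y⟫ + L * ‖x - y‖ ^ 2 * t)
      = ⟪gradf y, x - y⟫ + L / 2 * ‖x - y‖ ^ 2 := by
    rw [intervalIntegral.integral_add (f := fun _ : ℝ => ⟪gradf y, x - y⟫)
      (g := fun t : ℝ => L * ‖x - y‖ ^ 2 * t) (intervalIntegrable_const)
      ((continuous_const.mul continuous_id').intervalIntegrable 0 1 :
        IntervalIntegrable (fun t : ℝ => L * ‖x - y‖ ^ 2 * t) MeasureTheory.volume 0 1),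
      intervalIntegral.integral_const_mul]
    simp [integral_id]
    ring
  rw [hc0, hc1] at hint
  linarith [hmono.trans_eq hval, hint]


/-- Proposition 1, part 1: monotone descent of Algorithm 1 with the
optimality-checking control mechanism: if for every `t`, `Ψ(v t) ≤ Ψ(u t)`,
`γ t > L`, and `u (t+1)` minimizes `x ↦ φ x + (γ t/2)·‖x − v t + (1/γ t)·∇f(v t)‖²`,
then for every `t`, `Ψ(u (t+1)) + ((γ t − L)/2)·‖u (t+1) − v t‖² ≤ Ψ(u t)` with
`(γ t − L)/2 > 0`; in particular `Ψ(u t)` is nonincreasing. -/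
theorem stmt3
    {E : Type*} [NormedAddCommGroup E] [InnerProductSpace ℝ E]
    (f : E → ℝ) (φ : E → ℝ) (gradf : E → E) (L : ℝ)
    (hL : 0 < L)
    (hgrad : ∀ x : E, HasFDerivAt f (innerSL ℝ (gradf x)) x)
    (hlip : ∀ x y : E, ‖gradf x - gradf y‖ ≤ L * ‖x - y‖)
    (Ψ : E → ℝ) (hΨ : ∀ x : E, Ψ x = f x + φ x)
    (u v : ℕ → E) (γ : ℕ → ℝ)
    (hcheck : ∀ t : ℕ, Ψ (v t) ≤ Ψ (u t))
    (hγ : ∀ t : ℕ, γ t > L)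
    (hmin : ∀ t : ℕ, ∀ x : E,
      φ (u (t + 1)) + (γ t / 2) * ‖u (t + 1) - v t + (1 / γ t) • gradf (v t)‖ ^ 2 ≤
        φ x + (γ t / 2) * ‖x - v t + (1 / γ t) • gradf (v t)‖ ^ 2) :
    (∀ t : ℕ, (γ t - L) / 2 > 0 ∧
        Ψ (u (t + 1)) + ((γ t - L) / 2) * ‖u (t + 1) - v t‖ ^ 2 ≤ Ψ (u t)) ∧
      (∀ t : ℕ, Ψ (u (t + 1)) ≤ Ψ (u t)) := by
  have key : ∀ t : ℕ, Ψ (u (t + 1)) + ((γ t - L) / 2) * ‖u (t + 1) - v t‖ ^ 2 ≤ Ψ (u t) := by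
    intro t
    have hγt : (0:ℝ) < γ t := hL.trans (hγ t)
    set g := gradf (v t) with hg
    set d := u (t + 1) - v t with hd
    -- minimization inequality at x = v t
    have h1 := hmin t (v t)
    have e1 : ‖u (t + 1) - v t + (1 / γ t) • g‖ ^ 2
        = ‖d‖ ^ 2 + 2 * ((1 / γ t) * ⟪d, g⟫) + (1 / γ t) ^ 2 * ‖g‖ ^ 2 := by
      rw [← hd, norm_add_sq_real, real_inner_smul_right, norm_smul]
      simp [abs_of_pos (by positivity : (0:ℝ) < 1 / γ t), mul_pow]
    have e2 : ‖v t - v t + (1 / γ t) • g‖ ^ 2 = (1 / γ t) ^ 2 * ‖g‖ ^ 2 := by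
      rw [sub_self, zero_add, norm_smul]
      simp [abs_of_pos (by positivity : (0:ℝ) < 1 / γ t), mul_pow]
    rw [e1, e2] at h1
    have hγne : γ t ≠ 0 := ne_of_gt hγt
    have h2 : φ (u (t + 1)) + γ t / 2 * ‖d‖ ^ 2 + ⟪d, g⟫ ≤ φ (v t) := by
      have : γ t / 2 * (2 * ((1 / γ t) * ⟪d, g⟫)) = ⟪d, g⟫ := by
        field_simp
      nlinarith [h1]
    -- descent lemma
    have h3 : f (u (t + 1)) ≤ f (v t) + ⟪g, d⟫ + L / 2 * ‖d‖ ^ 2 :=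
      descent_lemma f gradf L hL hgrad hlip (u (t + 1)) (v t)
    have hsym : ⟪g, d⟫ = ⟪d, g⟫ := real_inner_comm _ _
    have := hcheck t
    rw [hΨ (u (t + 1)), hΨ (v t)] at *
    nlinarith [h2, h3]
  refine ⟨fun t => ⟨by linarith [hγ t], key t⟩, fun t => ?_⟩
  have := key t
  nlinarith [sq_nonneg ‖u (t + 1) - v t‖, hγ t]
end

section
/- (Proposition 1, part 2, convex version: accumulation points of the controlled propagation are minimizers.) Let (u^t), (v^t) be sequences in E and (γ^t) real parameters with 0 < γ_min ≤ γ^t ≤ γ_max for all t, such that u^{t+1} minimizes over E the objective u ↦ φ(u) + (γ^t/2)·‖u − v^t + (1/γ^t)·∇f(v^t)‖² for every t, and ‖u^{t+1} − v^t‖ → 0 as t → ∞. If u* ∈ E is an accumulation point of (v^t), i.e. v^{t_p} → u* along a subsequence t_p → ∞, then u* is a global minimizer of Ψ = f + φ over E. -/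
open scoped RealInnerProductSpace

lemma grad_ineq {E : Type*} [NormedAddCommGroup E] [InnerProductSpace ℝ E]
    (f : E → ℝ) (g a : E) (hf : ConvexOn ℝ Set.univ f)
    (hd : HasFDerivAt f (innerSL ℝ g) a) (x : E) :
    f a + ⟪g, x - a⟫ ≤ f x := by
  set d := x - a with hdd
  have hline : HasDerivAt (fun s : ℝ => a + s • d) d 0 := by
    simpa using (((hasDerivAt_id (0:ℝ)).smul_const d).const_add a)
  have hF : HasDerivAt (fun s : ℝ => f (a + s • d)) ⟪g, d⟫ 0 := by
    have hd' : HasFDerivAt f (innerSL ℝ g) (a + (0:ℝ) • d) := by simpa using hd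
    have := hd'.comp_hasDerivAt (x := (0:ℝ)) hline
    exact this
  have hslope : Filter.Tendsto (slope (fun s : ℝ => f (a + s • d)) 0)
      (nhdsWithin 0 (Set.Ioi 0)) (nhds ⟪g, d⟫) :=
    (hasDerivAt_iff_tendsto_slope.mp hF).mono_left
      (nhdsWithin_mono 0 (fun s hs => ne_of_gt hs))
  have hev : ∀ᶠ s in nhdsWithin (0:ℝ) (Set.Ioi 0),
      slope (fun s : ℝ => f (a + s • d)) 0 s ≤ f x - f a := by
    filter_upwards [Ioc_mem_nhdsGT_of_mem (by simp : (0:ℝ) ∈ Set.Ico 0 1)] with s hs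
    obtain ⟨hs0, hs1⟩ := hs
    have hcv := hf.2 (Set.mem_univ a) (Set.mem_univ x) (by linarith : (0:ℝ) ≤ 1 - s)
      (le_of_lt hs0) (by ring)
    have heq : a + s • d = (1 - s) • a + s • x := by
      rw [hdd, smul_sub]; module
    have h1 : f (a + s • d) ≤ (1 - s) * f a + s * f x := by
      rw [heq]; simpa using hcv
    rw [slope_def_field, sub_zero, div_le_iff₀ hs0]
    simp only [zero_smul, add_zero]
    nlinarith
  have := le_of_tendsto hslope hev
  linarith

lemma expand_sq {E : Type*} [NormedAddCommGroup E] [InnerProductSpace ℝ E]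
    (γ : ℝ) (hγ : 0 < γ) (a g : E) :
    (γ / 2) * ‖a + (1 / γ) • g‖ ^ 2 =
      (γ / 2) * ‖a‖ ^ 2 + ⟪a, g⟫ + (1 / (2 * γ)) * ‖g‖ ^ 2 := by
  rw [norm_add_sq_real, norm_smul, real_inner_smul_right]
  rw [Real.norm_eq_abs, abs_of_pos (by positivity : (0:ℝ) < 1/γ)]
  field_simp

/-- Proposition 1, part 2, convex version: accumulation points of
the controlled propagation are global minimizers of `Ψ = f + φ`. -/
theorem stmt6
    {E : Type*} [NormedAddCommGroup E] [InnerProductSpace ℝ E]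
    (f : E → ℝ) (φ : E → ℝ) (gradf : E → E)
    (hf : ConvexOn ℝ Set.univ f)
    (hgrad : ∀ x : E, HasFDerivAt f (innerSL ℝ (gradf x)) x)
    (hgradcont : Continuous gradf)
    (hφ : ConvexOn ℝ Set.univ φ) (hφcont : Continuous φ)
    (Ψ : E → ℝ) (hΨ : ∀ x : E, Ψ x = f x + φ x)
    (u v : ℕ → E) (γ : ℕ → ℝ) (γ_min γ_max : ℝ)
    (hγmin : 0 < γ_min) (hγbound : ∀ t : ℕ, γ_min ≤ γ t ∧ γ t ≤ γ_max)
    (hmin : ∀ t : ℕ, ∀ x : E,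
      φ (u (t + 1)) + (γ t / 2) * ‖u (t + 1) - v t + (1 / γ t) • gradf (v t)‖ ^ 2 ≤
        φ x + (γ t / 2) * ‖x - v t + (1 / γ t) • gradf (v t)‖ ^ 2)
    (hdiff : Filter.Tendsto (fun t : ℕ => ‖u (t + 1) - v t‖) Filter.atTop (nhds 0))
    (u_star : E) (tp : ℕ → ℕ) (htp : StrictMono tp)
    (hacc : Filter.Tendsto (fun p : ℕ => v (tp p)) Filter.atTop (nhds u_star)) :
    ∀ x : E, Ψ u_star ≤ Ψ x := by
  intro x
  -- Step A: rearranged optimality inequality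
  have key : ∀ t : ℕ, ∀ w : E,
      φ (u (t + 1)) ≤ φ w + (γ_max / 2) * ‖w - v t‖ ^ 2 +
        ⟪w - u (t + 1), gradf (v t)⟫ := by
    intro t w
    obtain ⟨h1, h2⟩ := hγbound t
    have hγt : 0 < γ t := lt_of_lt_of_le hγmin h1
    have hm := hmin t w
    rw [expand_sq (γ t) hγt (u (t+1) - v t) (gradf (v t)),
        expand_sq (γ t) hγt (w - v t) (gradf (v t))] at hm
    have hinner : ⟪w - v t, gradf (v t)⟫ - ⟪u (t+1) - v t, gradf (v t)⟫ =
        ⟪w - u (t+1), gradf (v t)⟫ := by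
      rw [← inner_sub_left]; congr 1; abel
    have ha1 : 0 ≤ (γ t / 2) * ‖u (t+1) - v t‖ ^ 2 := by positivity
    have ha2 : (γ t / 2) * ‖w - v t‖ ^ 2 ≤ (γ_max / 2) * ‖w - v t‖ ^ 2 := by
      apply mul_le_mul_of_nonneg_right (by linarith) (by positivity)
    linarith
  -- Step B: limits along the subsequence
  have htt : Filter.Tendsto tp Filter.atTop Filter.atTop := htp.tendsto_atTop
  have hdiff' : Filter.Tendsto (fun p => ‖u (tp p + 1) - v (tp p)‖)
      Filter.atTop (nhds 0) := hdiff.comp htt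
  have hvec : Filter.Tendsto (fun p => u (tp p + 1) - v (tp p))
      Filter.atTop (nhds 0) := tendsto_zero_iff_norm_tendsto_zero.mpr hdiff'
  have hu' : Filter.Tendsto (fun p => u (tp p + 1)) Filter.atTop (nhds u_star) := by
    have := hvec.add hacc
    simpa using this
  have hg : Filter.Tendsto (fun p => gradf (v (tp p))) Filter.atTop
      (nhds (gradf u_star)) := (hgradcont.tendsto _).comp hacc
  -- Step C: limit inequality
  have keyC : ∀ w : E, φ u_star ≤ φ w + (γ_max / 2) * ‖w - u_star‖ ^ 2 +
      ⟪w - u_star, gradf u_star⟫ := by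
    intro w
    have hL : Filter.Tendsto (fun p => φ (u (tp p + 1))) Filter.atTop
        (nhds (φ u_star)) := (hφcont.tendsto _).comp hu'
    have hR : Filter.Tendsto
        (fun p => φ w + (γ_max / 2) * ‖w - v (tp p)‖ ^ 2 +
          ⟪w - u (tp p + 1), gradf (v (tp p))⟫) Filter.atTop
        (nhds (φ w + (γ_max / 2) * ‖w - u_star‖ ^ 2 + ⟪w - u_star, gradf u_star⟫)) := by
      apply Filter.Tendsto.add
      · exact tendsto_const_nhds.add
          (tendsto_const_nhds.mul (((tendsto_const_nhds.sub hacc).norm).pow 2))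
      · exact (tendsto_const_nhds.sub hu').inner hg
    exact le_of_tendsto_of_tendsto' hL hR (fun p => key (tp p) w)
  -- Step D: scale towards u_star
  set d := x - u_star with hdd
  have keyD : ∀ s : ℝ, 0 < s → s ≤ 1 →
      φ u_star ≤ φ x + (γ_max / 2) * s * ‖d‖ ^ 2 + ⟪d, gradf u_star⟫ := by
    intro s hs0 hs1
    have hC := keyC (u_star + s • d)
    have hw : u_star + s • d - u_star = s • d := by abel
    rw [hw, norm_smul, Real.norm_eq_abs, abs_of_pos hs0, real_inner_smul_left,
        mul_pow] at hC
    have hcv : φ (u_star + s • d) ≤ (1 - s) * φ u_star + s * φ x := by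
      have := hφ.2 (Set.mem_univ u_star) (Set.mem_univ x) (by linarith : (0:ℝ) ≤ 1 - s)
        (le_of_lt hs0) (by ring)
      have heq : u_star + s • d = (1 - s) • u_star + s • x := by
        rw [hdd, smul_sub]; module
      rw [heq]; simpa using this
    nlinarith [sq_nonneg ‖d‖]
  -- Step E: let s → 0
  have keyE : φ u_star ≤ φ x + ⟪d, gradf u_star⟫ := by
    have htend : Filter.Tendsto
        (fun n : ℕ => φ x + (γ_max / 2) * (1 / (n + 1)) * ‖d‖ ^ 2 + ⟪d, gradf u_star⟫)
        Filter.atTop (nhds (φ x + (γ_max / 2) * 0 * ‖d‖ ^ 2 + ⟪d, gradf u_star⟫)) := by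
      apply Filter.Tendsto.add _ tendsto_const_nhds
      apply Filter.Tendsto.add tendsto_const_nhds
      exact ((tendsto_const_nhds.mul tendsto_one_div_add_atTop_nhds_zero_nat).mul
        tendsto_const_nhds)
    have hle := le_of_tendsto_of_tendsto' (tendsto_const_nhds (x := φ u_star)) htend
      (fun n => keyD (1 / (n + 1)) (by positivity)
        (by rw [div_le_one (by positivity)]; linarith [Nat.cast_nonneg (α := ℝ) n]))
    simpa using hle
  have hgi := grad_ineq f (gradf u_star) u_star hf (hgrad u_star) x
  have hcomm : ⟪d, gradf u_star⟫ = ⟪gradf u_star, d⟫ := real_inner_comm _ _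
  rw [hΨ, hΨ]
  rw [hdd] at keyE hcomm
  linarith
end

section
/- (Proposition 3: fixed-point convergence of GDC with architecture normalization.) Let f be ρ-strongly convex (i.e. u ↦ f(u) − (ρ/2)·‖u‖² is convex) with ρ > 0, with ∇f Lipschitz continuous with constant L > 0, and let φ be convex. Let T_G : E → E be Lipschitz with constant 1 + δ_g and T_D : E → E be Lipschitz with constant 1 + δ_d, where δ_g ≥ 0, δ_d ≥ 0, and assume (1 + δ_d)·(1 + δ_g)·|ρ − L| < ρ + L. Let γ be a real parameter with γ ≥ (ρ + L)/2 and √(1 − 2ρL/(γ·(ρ + L)))·(1 + δ_d)·(1 + δ_g) < 1, and let T_C : E → E be a map such that for every x ∈ E, T_C(x) minimizes over E the objective u ↦ φ(u) + (γ/2)·‖u − x + (1/γ)·∇f(x)‖². Then for any initial point u^0 ∈ E, the sequence defined by u^{t+1} = T_C(T_D(T_G(u^t))) converges to a point u* ∈ E which is the unique fixed point of the composed operator T_C ∘ T_D ∘ T_G. -/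
open scoped RealInnerProductSpace

section GDCHelpers
variable {E : Type*} [NormedAddCommGroup E] [InnerProductSpace ℝ E]

lemma hasGrad_half_sq (c : ℝ) (x : E) :
    HasFDerivAt (fun u : E => (c/2)*‖u‖^2) (innerSL ℝ (c • x)) x := by
  have h := ((hasStrictFDerivAt_norm_sq x).hasFDerivAt).const_mul (c/2)
  refine h.congr_fderiv ?_
  ext v
  simp [real_inner_smul_left]
  ring

lemma grad_ineq_s17 (F : E → ℝ) (gF : E → E)
    (hgF : ∀ x, HasFDerivAt F (innerSL ℝ (gF x)) x)
    (hconv : ConvexOn ℝ Set.univ F) (x y : E) :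
    F x + ⟪gF x, y - x⟫ ≤ F y := by
  set q : ℝ → ℝ := fun t => F (x + t • (y - x)) with hq
  have hqconv : ConvexOn ℝ Set.univ q := by
    have := hconv.comp_affineMap (AffineMap.lineMap x y : ℝ →ᵃ[ℝ] E)
    simp only [Set.preimage_univ] at this
    have heq : q = F ∘ (AffineMap.lineMap x y : ℝ →ᵃ[ℝ] E) := by
      funext t
      simp only [Function.comp, AffineMap.lineMap_apply_module, hq]
      congr 1
      rw [smul_sub, sub_smul, one_smul]
      abel
    rw [heq]; exact this
  have hline : HasDerivAt (fun t : ℝ => x + t • (y - x)) (y - x) (0:ℝ) := by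
    simpa using ((hasDerivAt_id (0:ℝ)).smul_const (y - x)).const_add x
  have hder : HasDerivAt q ⟪gF x, y - x⟫ 0 := by
    have := (hgF (x + (0:ℝ) • (y - x))).comp_hasDerivAt 0 hline
    simp only [zero_smul, add_zero] at this
    exact this
  have hle := hqconv.le_slope_of_hasDerivAt (Set.mem_univ (0:ℝ)) (Set.mem_univ (1:ℝ))
    one_pos hder
  rw [slope_def_field] at hle
  simp only [hq] at hle
  simp only [zero_smul, add_zero, one_smul] at hle
  have h1 : x + (y - x) = y := by abel
  rw [h1] at hle
  norm_num at hle
  linarith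

lemma convex_of_monotone_grad (F : E → ℝ) (gF : E → E)
    (hgF : ∀ x, HasFDerivAt F (innerSL ℝ (gF x)) x)
    (hmono : ∀ x y : E, 0 ≤ ⟪gF x - gF y, x - y⟫) :
    ConvexOn ℝ Set.univ F := by
  refine ⟨convex_univ, ?_⟩
  intro x _ y _ a b ha hb hab
  set q : ℝ → ℝ := fun t => F (y + t • (x - y)) with hq
  have hline : ∀ t : ℝ, HasDerivAt (fun t : ℝ => y + t • (x - y)) (x - y) t := by
    intro t
    simpa using ((hasDerivAt_id t).smul_const (x - y)).const_add y
  have hder : ∀ t : ℝ, HasDerivAt q ⟪gF (y + t • (x - y)), x - y⟫ t := by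
    intro t
    have := (hgF (y + t • (x - y))).comp_hasDerivAt t (hline t)
    exact this
  have hdiff : Differentiable ℝ q := fun t => (hder t).differentiableAt
  have hderiv : ∀ t, deriv q t = ⟪gF (y + t • (x - y)), x - y⟫ := fun t => (hder t).deriv
  have hmonoq : Monotone (deriv q) := by
    intro s t hst
    rw [hderiv, hderiv]
    rcases eq_or_lt_of_le hst with rfl | hlt
    · exact le_rfl
    · have key : 0 ≤ ⟪gF (y + t • (x - y)) - gF (y + s • (x - y)),
          (y + t • (x - y)) - (y + s • (x - y))⟫ := hmono _ _
      have hz : (y + t • (x - y)) - (y + s • (x - y)) = (t - s) • (x - y) := by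
        rw [sub_smul]; abel
      rw [hz, real_inner_smul_right, inner_sub_left] at key
      have hts : 0 < t - s := by linarith
      nlinarith [key, hts, mul_pos hts hts]
  have hqconv : ConvexOn ℝ Set.univ q := hmonoq.convexOn_univ_of_deriv hdiff
  have h2 := hqconv.2 (Set.mem_univ (1:ℝ)) (Set.mem_univ (0:ℝ)) ha hb hab
  simp only [smul_eq_mul, mul_one, mul_zero, add_zero, hq] at h2
  have e1 : y + a • (x - y) = a • x + b • y := by
    rw [smul_sub]
    have : b = 1 - a := by linarith
    rw [this, sub_smul, one_smul]; abel
  have e0 : y + (0:ℝ) • (x - y) = y := by simp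
  have e11 : y + (1:ℝ) • (x - y) = x := by rw [one_smul]; abel
  rw [e1, e0, e11] at h2
  simpa [smul_eq_mul] using h2

lemma quad_lower (F : E → ℝ) (gF : E → E) (c : ℝ) (hc : 0 < c)
    (hgF : ∀ x, HasFDerivAt F (innerSL ℝ (gF x)) x)
    (hconv : ConvexOn ℝ Set.univ F)
    (hGconv : ConvexOn ℝ Set.univ (fun u => (c/2)*‖u‖^2 - F u)) (x y : E) :
    (1/(2*c))*‖gF y - gF x‖^2 ≤ F y - F x - ⟪gF x, y - x⟫ := by
  have hgG : ∀ z : E, HasFDerivAt (fun u => (c/2)*‖u‖^2 - F u)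
      (innerSL ℝ (c • z - gF z)) z := by
    intro z
    have := (hasGrad_half_sq c z).sub (hgF z)
    rw [← map_sub] at this
    exact this
  set D := gF y - gF x with hD
  set z := y - (1/c) • D with hz
  have A1 := grad_ineq_s17 F gF hgF hconv x z
  have A2 := grad_ineq_s17 _ _ hgG hGconv y z
  have e1 : ⟪gF x, z - x⟫ = ⟪gF x, y - x⟫ - (1/c)*⟪gF x, D⟫ := by
    rw [hz]
    rw [show y - (1/c) • D - x = (y - x) - (1/c) • D by abel]
    rw [inner_sub_right, real_inner_smul_right]
  have e2 : ⟪c • y - gF y, z - y⟫ = -⟪y, D⟫ + (1/c)*⟪gF y, D⟫ := by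
    rw [hz, show y - (1/c) • D - y = -((1/c) • D) by abel]
    rw [inner_neg_right, inner_sub_left, real_inner_smul_right, real_inner_smul_right,
      real_inner_smul_left]
    field_simp
    ring
  have e3 : (c/2)*‖z‖^2 = (c/2)*‖y‖^2 - ⟪y, D⟫ + (1/(2*c))*‖D‖^2 := by
    rw [hz, norm_sub_sq_real, real_inner_smul_right, norm_smul]
    rw [mul_pow, Real.norm_eq_abs, sq_abs]
    field_simp
  have e4 : (1/c)*⟪gF y, D⟫ - (1/c)*⟪gF x, D⟫ = (1/c)*‖D‖^2 := by
    rw [← mul_sub, ← inner_sub_left, ← hD, real_inner_self_eq_norm_sq]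
  rw [e1] at A1
  rw [e2, e3] at A2
  have e8 : (1/c)*‖D‖^2 = (1/(2*c))*‖D‖^2 + (1/(2*c))*‖D‖^2 := by
    field_simp; ring
  linarith

lemma coco_of_convex (F : E → ℝ) (gF : E → E) (c : ℝ) (hc : 0 < c)
    (hgF : ∀ x, HasFDerivAt F (innerSL ℝ (gF x)) x)
    (hconv : ConvexOn ℝ Set.univ F)
    (hGconv : ConvexOn ℝ Set.univ (fun u => (c/2)*‖u‖^2 - F u)) (x y : E) :
    (1/c) * ‖gF y - gF x‖^2 ≤ ⟪gF y - gF x, y - x⟫ := by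
  have h1 := quad_lower F gF c hc hgF hconv hGconv x y
  have h2 := quad_lower F gF c hc hgF hconv hGconv y x
  have e5 : ‖gF x - gF y‖^2 = ‖gF y - gF x‖^2 := by rw [norm_sub_rev]
  have e6 : ⟪gF y - gF x, y - x⟫ = ⟪gF y, y - x⟫ - ⟪gF x, y - x⟫ := inner_sub_left _ _ _
  have e7 : ⟪gF y, x - y⟫ = -⟪gF y, y - x⟫ := by
    rw [show x - y = -(y-x) by abel, inner_neg_right]
  rw [e5] at h2
  rw [e7] at h2
  rw [e6]
  have e8 : (1/c)*‖gF y - gF x‖^2 = (1/(2*c))*‖gF y - gF x‖^2 + (1/(2*c))*‖gF y - gF x‖^2 := by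
    field_simp; ring
  linarith

lemma combo_sq (A B : E) (t : ℝ) :
    ‖(1-t) • A + t • B‖^2 = (1-t)*‖A‖^2 + t*‖B‖^2 - t*(1-t)*‖A-B‖^2 := by
  simp only [← real_inner_self_eq_norm_sq, inner_add_left, inner_add_right, inner_sub_left,
    inner_sub_right, real_inner_smul_left, real_inner_smul_right, real_inner_comm A B]
  ring

end GDCHelpers

set_option maxHeartbeats 1000000 in
/-- Proposition 3: fixed-point convergence of GDC with
architecture normalization: under strong convexity of `f`, Lipschitz gradient,
convex `φ`, Lipschitz generative/discriminative operators, the compatibility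
condition `(1+δ_d)(1+δ_g)|ρ−L| < ρ+L`, an admissible `γ`, and a corrective
operator `T_C` given by the proximal-gradient step, the iterates
`u^{t+1} = T_C(T_D(T_G(u^t)))` converge to the unique fixed point of
`T_C ∘ T_D ∘ T_G`. -/
theorem stmt17
    {E : Type*} [NormedAddCommGroup E] [InnerProductSpace ℝ E] [CompleteSpace E]
    (f : E → ℝ) (gradf : E → E)
    (hgrad : ∀ x : E, HasFDerivAt f (innerSL ℝ (gradf x)) x)
    (ρ L : ℝ) (hρ : 0 < ρ) (hL : 0 < L)
    (hsc : ConvexOn ℝ Set.univ (fun u : E => f u - (ρ / 2) * ‖u‖ ^ 2))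
    (hlip : ∀ x y : E, ‖gradf x - gradf y‖ ≤ L * ‖x - y‖)
    (φ : E → ℝ) (hφ : ConvexOn ℝ Set.univ φ)
    (δg δd : ℝ) (hδg : 0 ≤ δg) (hδd : 0 ≤ δd)
    (TG TD : E → E)
    (hTG : ∀ x y : E, ‖TG x - TG y‖ ≤ (1 + δg) * ‖x - y‖)
    (hTD : ∀ x y : E, ‖TD x - TD y‖ ≤ (1 + δd) * ‖x - y‖)
    (hcompat : (1 + δd) * (1 + δg) * |ρ - L| < ρ + L)
    (γ : ℝ) (hγ : γ ≥ (ρ + L) / 2)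
    (hcontr : Real.sqrt (1 - 2 * ρ * L / (γ * (ρ + L))) * (1 + δd) * (1 + δg) < 1)
    (TC : E → E)
    (hTC : ∀ x : E, ∀ u : E,
      φ (TC x) + (γ / 2) * ‖TC x - x + (1 / γ) • gradf x‖ ^ 2 ≤
        φ u + (γ / 2) * ‖u - x + (1 / γ) • gradf x‖ ^ 2)
    (u0 : E) (u : ℕ → E) (hu0 : u 0 = u0)
    (hrec : ∀ t : ℕ, u (t + 1) = TC (TD (TG (u t)))) :
    ∃ u_star : E, Filter.Tendsto u Filter.atTop (nhds u_star) ∧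
      TC (TD (TG u_star)) = u_star ∧
      ∀ w : E, TC (TD (TG w)) = w → w = u_star := by
  have hρL : 0 < ρ + L := by linarith
  have hγpos : 0 < γ := lt_of_lt_of_le (by linarith) hγ
  have hγne : γ ≠ 0 := ne_of_gt hγpos
  -- gradient of the strongly convex part h = f - (ρ/2)‖·‖²
  have hgh : ∀ x : E, HasFDerivAt (fun u : E => f u - (ρ/2) * ‖u‖^2)
      (innerSL ℝ (gradf x - ρ • x)) x := by
    intro x
    have := (hgrad x).sub (hasGrad_half_sq ρ x)
    rw [← map_sub] at this
    exact this
  -- strong monotonicity of the gradient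
  have hmono : ∀ x y : E, ρ * ‖x - y‖^2 ≤ ⟪gradf x - gradf y, x - y⟫ := by
    intro x y
    have A1 := grad_ineq_s17 _ _ hgh hsc x y
    have A2 := grad_ineq_s17 _ _ hgh hsc y x
    have key : 0 ≤ ⟪(gradf x - ρ • x) - (gradf y - ρ • y), x - y⟫ := by
      have hsplit : ⟪(gradf x - ρ • x) - (gradf y - ρ • y), x - y⟫ =
          -⟪gradf x - ρ • x, y - x⟫ - ⟪gradf y - ρ • y, x - y⟫ := by
        rw [inner_sub_left, show y - x = -(x - y) by abel, inner_neg_right]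
        ring
      rw [hsplit]
      linarith
    have hexp : (gradf x - ρ • x) - (gradf y - ρ • y) = (gradf x - gradf y) - ρ • (x - y) := by
      rw [smul_sub]; abel
    rw [hexp, inner_sub_left, real_inner_smul_left, real_inner_self_eq_norm_sq] at key
    linarith
  -- cocoercivity inequality
  have coco : ∀ x y : E,
      ‖gradf x - gradf y‖^2 + ρ * L * ‖x - y‖^2 ≤ (ρ + L) * ⟪gradf x - gradf y, x - y⟫ := by
    intro x y
    rcases le_or_gt L ρ with hLρ | hρL'
    · have t1 : 0 ≤ (ρ + L) * (⟪gradf x - gradf y, x - y⟫ - ρ * ‖x - y‖^2) :=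
        mul_nonneg hρL.le (by linarith [hmono x y])
      have t2 : 0 ≤ (ρ - L) * ((ρ + L) * ‖x - y‖^2) :=
        mul_nonneg (by linarith) (mul_nonneg hρL.le (sq_nonneg _))
      have t3 : ‖gradf x - gradf y‖^2 ≤ (L * ‖x - y‖)^2 :=
        pow_le_pow_left₀ (norm_nonneg _) (hlip x y) 2
      nlinarith [t1, t2, t3]
    · set c0 := L - ρ with hc0def
      have hc0 : 0 < c0 := by simp [hc0def]; linarith
      have hGconv : ConvexOn ℝ Set.univ
          (fun u : E => (c0/2)*‖u‖^2 - (f u - (ρ/2) * ‖u‖^2)) := by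
        apply convex_of_monotone_grad _ (fun z : E => c0 • z - (gradf z - ρ • z))
        · intro z
          have := (hasGrad_half_sq c0 z).sub (hgh z)
          rw [← map_sub] at this
          exact this
        · intro a b
          have hv : (c0 • a - (gradf a - ρ • a)) - (c0 • b - (gradf b - ρ • b)) =
              L • (a - b) - (gradf a - gradf b) := by
            rw [hc0def]
            module
          rw [hv, inner_sub_left, real_inner_smul_left, real_inner_self_eq_norm_sq]
          nlinarith [real_inner_le_norm (gradf a - gradf b) (a - b), hlip a b,
            norm_nonneg (a - b), norm_nonneg (gradf a - gradf b)]
      have hco := coco_of_convex (fun u : E => f u - (ρ/2) * ‖u‖^2)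
        (fun z : E => gradf z - ρ • z) c0 hc0 hgh hsc hGconv x y
      have eqv : (gradf y - ρ • y) - (gradf x - ρ • x) = (gradf y - gradf x) - ρ • (y - x) := by
        module
      rw [eqv] at hco
      have eqN : ‖(gradf y - gradf x) - ρ • (y - x)‖^2 =
          ‖gradf y - gradf x‖^2 - 2*ρ*⟪gradf y - gradf x, y - x⟫ + ρ^2*‖y - x‖^2 := by
        rw [norm_sub_sq_real, real_inner_smul_right, norm_smul, Real.norm_eq_abs, mul_pow, sq_abs]
        ring
      have eqC : ⟪(gradf y - gradf x) - ρ • (y - x), y - x⟫ =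
          ⟪gradf y - gradf x, y - x⟫ - ρ*‖y - x‖^2 := by
        rw [inner_sub_left, real_inner_smul_left, real_inner_self_eq_norm_sq]
      rw [eqN, eqC] at hco
      -- flip orientation
      have s1 : ‖gradf y - gradf x‖^2 = ‖gradf x - gradf y‖^2 := by rw [norm_sub_rev]
      have s2 : ⟪gradf y - gradf x, y - x⟫ = ⟪gradf x - gradf y, x - y⟫ := by
        rw [show gradf y - gradf x = -(gradf x - gradf y) by abel,
          show y - x = -(x - y) by abel, inner_neg_neg]
      have s3 : ‖y - x‖^2 = ‖x - y‖^2 := by rw [norm_sub_rev]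
      rw [s1, s2, s3] at hco
      have hmul := mul_le_mul_of_nonneg_left hco hc0.le
      rw [← mul_assoc, mul_one_div, div_self (ne_of_gt hc0), one_mul] at hmul
      rw [hc0def] at hmul
      nlinarith [hmul]
  -- the contraction factor of the gradient step
  set k : ℝ := Real.sqrt (1 - 2 * ρ * L / (γ * (ρ + L))) with hk
  have hk0 : 0 ≤ k := Real.sqrt_nonneg _
  have hden : 0 < γ * (ρ + L) := mul_pos hγpos hρL
  have harg : 0 ≤ 1 - 2 * ρ * L / (γ * (ρ + L)) := by
    rw [sub_nonneg, div_le_one hden]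
    nlinarith [mul_le_mul_of_nonneg_right hγ hρL.le, sq_nonneg (ρ - L)]
  have hk2 : k^2 = 1 - 2 * ρ * L / (γ * (ρ + L)) := Real.sq_sqrt harg
  have hstep : ∀ x y : E,
      ‖(x - (1/γ) • gradf x) - (y - (1/γ) • gradf y)‖ ≤ k * ‖x - y‖ := by
    intro x y
    set vw := (x - (1/γ) • gradf x) - (y - (1/γ) • gradf y) with hvwdef
    have esm : ∀ z : E, γ • ((1/γ) • z) = z := by
      intro z
      rw [smul_smul, mul_one_div, div_self hγne, one_smul]
    have hvw : γ • vw = γ • (x - y) - (gradf x - gradf y) := by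
      rw [hvwdef, smul_sub, smul_sub, smul_sub, esm, esm, smul_sub]
      abel
    have hid : γ^2 * ‖vw‖^2 = γ^2*‖x - y‖^2 - 2*γ*⟪gradf x - gradf y, x - y⟫
        + ‖gradf x - gradf y‖^2 := by
      have h1 : ‖γ • vw‖^2 = γ^2 * ‖vw‖^2 := by
        rw [norm_smul, Real.norm_eq_abs, mul_pow, sq_abs]
      rw [← h1, hvw, norm_sub_sq_real, norm_smul, Real.norm_eq_abs, mul_pow, sq_abs,
        real_inner_smul_left]
      rw [real_inner_comm (x - y) (gradf x - gradf y)]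
      ring
    have hsq : ‖vw‖^2 ≤ (k * ‖x - y‖)^2 := by
      have hrhs : (ρ + L) * (γ^2 * (k * ‖x - y‖)^2) =
          ((ρ + L) * γ^2 - 2*ρ*L*γ) * ‖x - y‖^2 := by
        rw [mul_pow, hk2]
        field_simp
      have hbig : (ρ + L) * (γ^2 * ‖vw‖^2) ≤ (ρ + L) * (γ^2 * (k * ‖x - y‖)^2) := by
        rw [hrhs, hid]
        have H1 := mul_le_mul_of_nonneg_left (coco x y) hγpos.le
        have H2 : 0 ≤ (2*γ - (ρ + L)) * ‖gradf x - gradf y‖^2 :=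
          mul_nonneg (by linarith) (sq_nonneg _)
        nlinarith [H1, H2]
      have h2 := le_of_mul_le_mul_left hbig hρL
      exact le_of_mul_le_mul_left h2 (by positivity)
    calc ‖vw‖ = Real.sqrt (‖vw‖^2) := (Real.sqrt_sq (norm_nonneg _)).symm
      _ ≤ Real.sqrt ((k * ‖x - y‖)^2) := Real.sqrt_le_sqrt hsq
      _ = k * ‖x - y‖ := Real.sqrt_sq (mul_nonneg hk0 (norm_nonneg _))
  -- strong minimality of the proximal step
  have hps : ∀ x w : E,
      φ (TC x) + (γ/2)*‖TC x - x + (1/γ) • gradf x‖^2 + (γ/2)*‖w - TC x‖^2 ≤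
        φ w + (γ/2)*‖w - x + (1/γ) • gradf x‖^2 := by
    intro x w
    set p := TC x with hp
    set c := -x + (1/γ) • gradf x with hcdef
    have hpc : ∀ z : E, z - x + (1/γ) • gradf x = z + c := by
      intro z; rw [hcdef]; abel
    have hψ0 : ∀ z : E, φ p + (γ/2)*‖p + c‖^2 ≤ φ z + (γ/2)*‖z + c‖^2 := by
      intro z
      have := hTC x z
      rwa [hpc p, hpc z] at this
    have claim : ∀ t : ℝ, 0 < t → t < 1 →
        (γ/2)*(1-t)*‖w - p‖^2 ≤
          (φ w + (γ/2)*‖w + c‖^2) - (φ p + (γ/2)*‖p + c‖^2) := by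
      intro t ht0 ht1
      have hm := hψ0 ((1-t) • p + t • w)
      have hmc : (1-t) • p + t • w + c = (1-t) • (p + c) + t • (w + c) := by module
      have hfm := hφ.2 (Set.mem_univ p) (Set.mem_univ w) (by linarith : (0:ℝ) ≤ 1 - t)
        ht0.le (by ring)
      simp only [smul_eq_mul] at hfm
      have hnm : ‖(1-t) • p + t • w + c‖^2 =
          (1-t)*‖p + c‖^2 + t*‖w + c‖^2 - t*(1-t)*‖w - p‖^2 := by
        rw [hmc, combo_sq]
        rw [show p + c - (w + c) = -(w - p) by abel, norm_neg]
      rw [hnm] at hm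
      nlinarith [hm, hfm, ht0, mul_pos ht0 ht0]
    have key : ∀ A B SS : ℝ, 0 ≤ SS → 0 ≤ B - A →
        (∀ t : ℝ, 0 < t → t < 1 → (γ/2)*(1-t)*SS ≤ B - A) → A + (γ/2)*SS ≤ B := by
      intro A B SS hSS h0 hcl
      by_contra hcon
      push_neg at hcon
      have hD : B - A < (γ/2)*SS := by linarith
      have hcpos : 0 < (γ/2)*SS := lt_of_le_of_lt h0 hD
      have hne' : (γ/2)*SS ≠ 0 := ne_of_gt hcpos
      set t := ((γ/2)*SS - (B - A))/(2*((γ/2)*SS)) with htdef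
      have ht0 : 0 < t := div_pos (by linarith) (by linarith)
      have ht1 : t < 1 := by
        rw [htdef, div_lt_one (by linarith)]
        linarith
      have hcl' := hcl t ht0 ht1
      have ht : t * ((γ/2)*SS) = ((γ/2)*SS - (B - A))/2 := by
        rw [htdef, div_mul_eq_mul_div, mul_comm ((γ/2)*SS - (B - A)) ((γ/2)*SS),
          show (2:ℝ)*((γ/2)*SS) = ((γ/2)*SS)*2 by ring,
          mul_div_mul_left _ _ hne']
      have hr : (γ/2)*(1-t)*SS = (γ/2)*SS - t*((γ/2)*SS) := by ring
      rw [hr, ht] at hcl'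
      linarith
    have h0 : 0 ≤ (φ w + (γ/2)*‖w + c‖^2) - (φ p + (γ/2)*‖p + c‖^2) := by
      linarith [hψ0 w]
    rw [hpc p, hpc w]
    exact key (φ p + (γ/2)*‖p + c‖^2) (φ w + (γ/2)*‖w + c‖^2) (‖w - p‖^2)
      (sq_nonneg _) h0 claim
  -- non-expansiveness of TC relative to the gradient-step points
  have hne : ∀ x y : E, ‖TC x - TC y‖ ≤
      ‖(x - (1/γ) • gradf x) - (y - (1/γ) • gradf y)‖ := by
    intro x y
    set p := TC x with hp
    set q := TC y with hq
    set v := x - (1/γ) • gradf x with hv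
    set w := y - (1/γ) • gradf y with hw
    have hA := hps x q
    have hB := hps y p
    have r1 : p - x + (1/γ) • gradf x = p - v := by rw [hv]; abel
    have r2 : q - x + (1/γ) • gradf x = q - v := by rw [hv]; abel
    have r3 : q - y + (1/γ) • gradf y = q - w := by rw [hw]; abel
    have r4 : p - y + (1/γ) • gradf y = p - w := by rw [hw]; abel
    rw [r1, r2] at hA
    rw [r3, r4] at hB
    have r5 : ‖q - p‖ = ‖p - q‖ := norm_sub_rev _ _
    rw [show ‖q - p‖^2 = ‖p - q‖^2 by rw [r5]] at hA
    have hiden2 : (γ/2)*(‖q - v‖^2 + ‖p - w‖^2 - ‖p - v‖^2 - ‖q - w‖^2) =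
        γ*⟪p - q, v - w⟫ := by
      have hiden : ‖q - v‖^2 + ‖p - w‖^2 - ‖p - v‖^2 - ‖q - w‖^2 = 2*⟪p - q, v - w⟫ := by
        simp only [← real_inner_self_eq_norm_sq, inner_sub_left, inner_sub_right,
          real_inner_comm]
        ring
      rw [hiden]
      ring
    have hsum : γ*‖p - q‖^2 ≤ γ*⟪p - q, v - w⟫ := by
      rw [← hiden2]
      linarith
    have hinq : ‖p - q‖^2 ≤ ⟪p - q, v - w⟫ := le_of_mul_le_mul_left
      (by linarith) hγpos
    have hcs : ⟪p - q, v - w⟫ ≤ ‖p - q‖ * ‖v - w‖ := real_inner_le_norm _ _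
    rcases eq_or_lt_of_le (norm_nonneg (p - q)) with h0 | hpos
    · rw [← h0]
      exact norm_nonneg _
    · have : ‖p - q‖ * ‖p - q‖ ≤ ‖p - q‖ * ‖v - w‖ := by nlinarith [hinq, hcs]
      exact le_of_mul_le_mul_left this hpos
  -- the composed operator is a contraction
  set T : E → E := fun z => TC (TD (TG z)) with hT
  set K : ℝ := k * (1 + δd) * (1 + δg) with hK
  have hK0 : 0 ≤ K := by
    apply mul_nonneg (mul_nonneg hk0 (by linarith)) (by linarith)
  have hK1 : K < 1 := hcontr
  have hTlip : ∀ a b : E, ‖T a - T b‖ ≤ K * ‖a - b‖ := by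
    intro a b
    calc ‖T a - T b‖ ≤ ‖(TD (TG a) - (1/γ) • gradf (TD (TG a))) -
          (TD (TG b) - (1/γ) • gradf (TD (TG b)))‖ := hne _ _
      _ ≤ k * ‖TD (TG a) - TD (TG b)‖ := hstep _ _
      _ ≤ k * ((1 + δd) * ‖TG a - TG b‖) :=
          mul_le_mul_of_nonneg_left (hTD _ _) hk0
      _ ≤ k * ((1 + δd) * ((1 + δg) * ‖a - b‖)) :=
          mul_le_mul_of_nonneg_left
            (mul_le_mul_of_nonneg_left (hTG _ _) (by linarith)) hk0
      _ = K * ‖a - b‖ := by rw [hK]; ring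
  have hlipT : LipschitzWith (Real.toNNReal K) T := by
    apply LipschitzWith.of_dist_le_mul
    intro a b
    rw [dist_eq_norm, dist_eq_norm, Real.coe_toNNReal K hK0]
    exact hTlip a b
  have hKlt : Real.toNNReal K < 1 := by
    have h1 : ((Real.toNNReal K : NNReal) : ℝ) < ((1 : NNReal) : ℝ) := by
      rw [Real.coe_toNNReal K hK0]
      simpa using hK1
    exact_mod_cast h1
  have hcw : ContractingWith (Real.toNNReal K) T := ⟨hKlt, hlipT⟩
  haveI : Nonempty E := ⟨u0⟩
  refine ⟨ContractingWith.fixedPoint T hcw, ?_, ?_, ?_⟩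
  · have hiter : ∀ n : ℕ, T^[n] u0 = u n := by
      intro n
      induction n with
      | zero => simp [hu0]
      | succ n ih =>
        rw [Function.iterate_succ_apply', ih]
        exact (hrec n).symm
    exact (hcw.tendsto_iterate_fixedPoint u0).congr hiter
  · exact hcw.fixedPoint_isFixedPt
  · intro w hw
    exact hcw.fixedPoint_unique hw
end
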